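/- Let F_{n,p} be the random 2-SAT formula and x, y strictly distinct literals. Then Pr(x⇝x̄ and y⇝ȳ in F_{n,p}) − Pr(x⇝x̄)·Pr(y⇝ȳ) ≤ Σ_{k≥1} P_{n,p}(k)·[Pr(x⇝x̄ in F_{n,p}) − ((n−k)/(n−1))·Pr(x⇝x̄ in F_{n−k,p})], where P_{n,p}(k) is the probability that L⁺(y) is strictly distinct of size k. -/

import Mathlib

/-- The probability of an event `A` when each coordinate `e : E` is an
independent Bernoulli(`p`) bit. -/
noncomputable def bernoulliPr {E : Type*} [Fintype E] [DecidableEq E]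
    (p : ℝ) (A : Set (E → Bool)) : ℝ :=
  ∑ ω : E → Bool,
    Set.indicator A (fun ω' => ∏ e : E, if ω' e = true then p else 1 - p) ω

/-- A literal over `n` Boolean variables. -/
abbrev Lit (n : ℕ) := Fin n × Bool

/-- Negation of a literal. -/
def negLit {n : ℕ} (x : Lit n) : Lit n := (x.1, !x.2)

/-- Edge relation of the implication digraph of the random 2-SAT formula
encoded by `ω` : there is an edge `x → y` iff the clause `x̄ ∨ y` (an unordered
pair of strictly distinct literals) is present. -/
def fEdge {n : ℕ} (ω : Sym2 (Lit n) → Bool) (x y : Lit n) : Prop :=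
  x.1 ≠ y.1 ∧ ω s(negLit x, y) = true

/-- Directed reachability in the implication digraph (`x ⇝ x` by convention). -/
def freach {n : ℕ} (ω : Sym2 (Lit n) → Bool) : Lit n → Lit n → Prop :=
  Relation.ReflTransGen (fEdge ω)

/-- The out-set `L⁺(x)` of a literal `x`. -/
def outSet {n : ℕ} (ω : Sym2 (Lit n) → Bool) (x : Lit n) : Set (Lit n) :=
  {y | freach ω x y}

/-- A set of literals is strictly distinct if it contains no literal together
with its negation. -/
def SDset {n : ℕ} (M : Set (Lit n)) : Prop := ∀ y ∈ M, negLit y ∉ M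

/-- `P_{n,p}(k)` : the probability that in the random 2-SAT formula `F_{n,p}`
the out-set of the literal `x` consists of exactly `k` strictly distinct
literals. -/
noncomputable def Pnp (n : ℕ) (p : ℝ) (k : ℕ) (x : Lit n) : ℝ :=
  bernoulliPr p
    {ω : Sym2 (Lit n) → Bool | SDset (outSet ω x) ∧ (outSet ω x).ncard = k}

/-- The random graph `G_{n,q}` encoded by a configuration of edge-bits. -/
def graphOf {n : ℕ} (η : Sym2 (Fin n) → Bool) : SimpleGraph (Fin n) :=
  SimpleGraph.fromRel fun a b => η s(a, b) = true

/-- The probability that `G_{k,p}` is connected. -/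
noncomputable def connPr (k : ℕ) (p : ℝ) : ℝ :=
  bernoulliPr p {η : Sym2 (Fin k) → Bool | (graphOf η).Connected}

/-- `Q_{n,p}(k)` : the probability that the connected component of the vertex
`v` in `G_{n,2p-p²}` has exactly `k` vertices. -/
noncomputable def Qnp (n : ℕ) (p : ℝ) (k : ℕ) (v : Fin n) : ℝ :=
  bernoulliPr (2 * p - p ^ 2)
    {η : Sym2 (Fin n) → Bool | {y | (graphOf η).Reachable v y}.ncard = k}

/-- The probability that `x ⇝ x̄` in `F_{m,p}` for a (fixed, canonical) literal;
this probability does not depend on the choice of the literal.  For `m = 0`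
there are no literals and the value is `0`. -/
noncomputable def spineProb (m : ℕ) (p : ℝ) : ℝ :=
  if h : 0 < m then
    bernoulliPr p
      {ω : Sym2 (Lit m) → Bool |
        freach ω ((⟨0, h⟩, true) : Lit m) (negLit ((⟨0, h⟩, true) : Lit m))}
  else 0


namespace BPr
open Finset
open scoped Classical
variable {E E₂ : Type*} [Fintype E] [DecidableEq E] [Fintype E₂] [DecidableEq E₂] (p : ℝ)

def W (p : ℝ) {E : Type*} [Fintype E] (ω : E → Bool) : ℝ :=
  ∏ e : E, if ω e = true then p else 1 - p

lemma bernoulliPr_eq (A : Set (E → Bool)) :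
    bernoulliPr p A = ∑ ω : E → Bool, A.indicator (W p) ω := rfl

lemma W_nonneg (hp0 : 0 ≤ p) (hp1 : p ≤ 1) (ω : E → Bool) : 0 ≤ W p ω :=
  Finset.prod_nonneg fun e _ => by by_cases h : ω e = true <;> simp [h] <;> linarith

lemma ind_nonneg (hp0 : 0 ≤ p) (hp1 : p ≤ 1) (A : Set (E → Bool)) (ω : E → Bool) :
    0 ≤ A.indicator (W p) ω :=
  Set.indicator_nonneg (fun ω' _ => W_nonneg p hp0 hp1 ω') ω

lemma sum_W : ∑ ω : E → Bool, W p ω = 1 := by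
  have h := Fintype.prod_sum (fun (e : E) (b : Bool) => if b = true then p else 1 - p)
  have h2 : ∀ e : E, (∑ b : Bool, if b = true then p else 1 - p) = 1 := by
    intro e; simp [Fintype.sum_bool]
  rw [Fintype.prod_congr _ _ h2] at h
  simpa [W] using h.symm

lemma bernoulliPr_nonneg (hp0 : 0 ≤ p) (hp1 : p ≤ 1) (A : Set (E → Bool)) :
    0 ≤ bernoulliPr p A := by
  rw [bernoulliPr_eq]
  exact Finset.sum_nonneg fun ω _ => ind_nonneg p hp0 hp1 A ω

lemma bernoulliPr_mono (hp0 : 0 ≤ p) (hp1 : p ≤ 1) {A B : Set (E → Bool)} (h : A ⊆ B) :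
    bernoulliPr p A ≤ bernoulliPr p B := by
  rw [bernoulliPr_eq, bernoulliPr_eq]
  refine Finset.sum_le_sum fun ω _ => ?_
  by_cases hA : ω ∈ A
  · rw [Set.indicator_of_mem hA, Set.indicator_of_mem (h hA)]
  · rw [Set.indicator_of_notMem hA]
    exact ind_nonneg p hp0 hp1 B ω

lemma bernoulliPr_add_compl (A : Set (E → Bool)) :
    bernoulliPr p A + bernoulliPr p Aᶜ = 1 := by
  rw [bernoulliPr_eq, bernoulliPr_eq, ← Finset.sum_add_distrib, ← sum_W (E := E) p]
  refine Finset.sum_congr rfl fun ω _ => ?_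
  by_cases h : ω ∈ A
  · rw [Set.indicator_of_mem h, Set.indicator_of_notMem (by simpa using h), add_zero]
  · rw [Set.indicator_of_notMem h, Set.indicator_of_mem (by simpa using h), zero_add]

lemma bernoulliPr_inter_add_diff (A B : Set (E → Bool)) :
    bernoulliPr p (A ∩ B) + bernoulliPr p (A \ B) = bernoulliPr p A := by
  rw [bernoulliPr_eq, bernoulliPr_eq, bernoulliPr_eq, ← Finset.sum_add_distrib]
  refine Finset.sum_congr rfl fun ω _ => ?_
  by_cases hA : ω ∈ A <;> by_cases hB : ω ∈ B <;>
    simp [Set.indicator_apply, Set.mem_inter_iff, Set.mem_diff, hA, hB]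

/-- Probability of a finite disjoint union. -/
lemma bernoulliPr_biUnion {ι : Type*} (I : Finset ι) (f : ι → Set (E → Bool))
    (hd : ∀ i ∈ I, ∀ j ∈ I, i ≠ j → ∀ ω, ω ∈ f i → ω ∉ f j) :
    bernoulliPr p (⋃ i ∈ I, f i) = ∑ i ∈ I, bernoulliPr p (f i) := by
  rw [bernoulliPr_eq]
  rw [Finset.sum_congr rfl fun i (_ : i ∈ I) => bernoulliPr_eq p (f i), Finset.sum_comm]
  refine Finset.sum_congr rfl fun ω _ => ?_
  by_cases h : ω ∈ ⋃ i ∈ I, f i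
  · obtain ⟨i, hiI, hif⟩ := Set.mem_iUnion₂.mp h
    rw [Set.indicator_of_mem h, Finset.sum_eq_single i]
    · rw [Set.indicator_of_mem hif]
    · intro j hj hji
      exact Set.indicator_of_notMem (fun hjf => hd j hj i hiI hji ω hjf hif) _
    · intro hI; exact absurd hiI hI
  · rw [Set.indicator_of_notMem h, Finset.sum_eq_zero]
    intro i hi
    exact Set.indicator_of_notMem (fun hif => h (Set.mem_iUnion₂.mpr ⟨i, hi, hif⟩)) _

/-- `A` depends only on the coordinates satisfying `t`. -/
def DepOn (t : E → Prop) (A : Set (E → Bool)) : Prop :=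
  ∀ ω ω' : E → Bool, (∀ e, t e → ω e = ω' e) → ω ∈ A → ω' ∈ A

variable (t : E → Prop)

noncomputable def phiT : ((∀ _ : {e : E // t e}, Bool) × ∀ _ : {e : E // ¬ t e}, Bool) ≃ (E → Bool) :=
  (Equiv.piEquivPiSubtypeProd t fun _ => Bool).symm

lemma phiT_apply_pos (u : ∀ _ : {e : E // t e}, Bool) (v : ∀ _ : {e : E // ¬ t e}, Bool)
    (e : E) (h : t e) : phiT t (u, v) e = u ⟨e, h⟩ := by
  simp [phiT, Equiv.piEquivPiSubtypeProd, h]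

lemma phiT_apply_neg (u : ∀ _ : {e : E // t e}, Bool) (v : ∀ _ : {e : E // ¬ t e}, Bool)
    (e : E) (h : ¬ t e) : phiT t (u, v) e = v ⟨e, h⟩ := by
  simp [phiT, Equiv.piEquivPiSubtypeProd, h]

lemma W_phiT (u : ∀ _ : {e : E // t e}, Bool) (v : ∀ _ : {e : E // ¬ t e}, Bool) :
    W p (phiT t (u, v)) = W p u * W p v := by
  have h := Fintype.prod_subtype_mul_prod_subtype t
    (fun e : E => if phiT t (u, v) e = true then p else 1 - p)
  rw [W, ← h]
  congr 1
  · exact Finset.prod_congr rfl fun i _ => by rw [phiT_apply_pos t u v i.1 i.2]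
  · exact Finset.prod_congr rfl fun i _ => by rw [phiT_apply_neg t u v i.1 i.2]

lemma mem_phiT_left {A : Set (E → Bool)} (hA : DepOn t A)
    (u : ∀ _ : {e : E // t e}, Bool) (v v' : ∀ _ : {e : E // ¬ t e}, Bool) :
    phiT t (u, v) ∈ A ↔ phiT t (u, v') ∈ A := by
  constructor <;> intro h <;> refine hA _ _ (fun e he => ?_) h <;>
    rw [phiT_apply_pos t u _ e he, phiT_apply_pos t u _ e he]

lemma mem_phiT_right {B : Set (E → Bool)} (hB : DepOn (fun e => ¬ t e) B)
    (u u' : ∀ _ : {e : E // t e}, Bool) (v : ∀ _ : {e : E // ¬ t e}, Bool) :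
    phiT t (u, v) ∈ B ↔ phiT t (u', v) ∈ B := by
  constructor <;> intro h <;> refine hB _ _ (fun e he => ?_) h <;>
    rw [phiT_apply_neg t _ v e he, phiT_apply_neg t _ v e he]

lemma sum_reindex_phiT (A : Set (E → Bool)) :
    ∑ ω : E → Bool, A.indicator (W p) ω
      = ∑ uv : (∀ _ : {e : E // t e}, Bool) × (∀ _ : {e : E // ¬ t e}, Bool),
          A.indicator (W p) (phiT t uv) :=
  (Fintype.sum_equiv (phiT t) (fun uv => A.indicator (W p) (phiT t uv))
    (fun ω => A.indicator (W p) ω) (fun _ => rfl)).symm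

lemma depOn_eval {A : Set (E → Bool)} (hA : DepOn t A) :
    bernoulliPr p A
      = ∑ u : ∀ _ : {e : E // t e}, Bool,
          if phiT t (u, fun _ => false) ∈ A then W p u else 0 := by
  rw [bernoulliPr_eq, sum_reindex_phiT p t, Fintype.sum_prod_type]
  refine Finset.sum_congr rfl fun u _ => ?_
  have key : ∀ v : ∀ _ : {e : E // ¬ t e}, Bool,
      A.indicator (W p) (phiT t (u, v))
        = (if phiT t (u, fun _ => false) ∈ A then W p u else 0) * W p v := by
    intro v
    by_cases h : phiT t (u, v) ∈ A
    · rw [Set.indicator_of_mem h, W_phiT,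
        if_pos ((mem_phiT_left t hA u v (fun _ => false)).mp h)]
    · rw [Set.indicator_of_notMem h,
        if_neg (fun h' => h ((mem_phiT_left t hA u v (fun _ => false)).mpr h')), zero_mul]
  rw [Finset.sum_congr rfl fun v _ => key v, ← Finset.mul_sum, sum_W, mul_one]

lemma depOn_eval' {B : Set (E → Bool)} (hB : DepOn (fun e => ¬ t e) B) :
    bernoulliPr p B
      = ∑ v : ∀ _ : {e : E // ¬ t e}, Bool,
          if phiT t (fun _ => false, v) ∈ B then W p v else 0 := by
  rw [bernoulliPr_eq, sum_reindex_phiT p t, Fintype.sum_prod_type_right]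
  refine Finset.sum_congr rfl fun v _ => ?_
  have key : ∀ u : ∀ _ : {e : E // t e}, Bool,
      B.indicator (W p) (phiT t (u, v))
        = (if phiT t (fun _ => false, v) ∈ B then W p v else 0) * W p u := by
    intro u
    by_cases h : phiT t (u, v) ∈ B
    · rw [Set.indicator_of_mem h, W_phiT,
        if_pos ((mem_phiT_right t hB u (fun _ => false) v).mp h), mul_comm]
    · rw [Set.indicator_of_notMem h,
        if_neg (fun h' => h ((mem_phiT_right t hB u (fun _ => false) v).mpr h')), zero_mul]
  rw [Finset.sum_congr rfl fun u _ => key u, ← Finset.mul_sum, sum_W, mul_one]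

/-- Independence of events depending on disjoint coordinate sets. -/
lemma indep {A B : Set (E → Bool)} (hA : DepOn t A) (hB : DepOn (fun e => ¬ t e) B) :
    bernoulliPr p (A ∩ B) = bernoulliPr p A * bernoulliPr p B := by
  rw [bernoulliPr_eq, sum_reindex_phiT p t, Fintype.sum_prod_type,
    depOn_eval p t hA, depOn_eval' p t hB, Finset.sum_mul_sum]
  refine Finset.sum_congr rfl fun u _ => Finset.sum_congr rfl fun v _ => ?_
  have h1 : phiT t (u, v) ∈ A ↔ phiT t (u, fun _ => false) ∈ A :=
    mem_phiT_left t hA u v (fun _ => false)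
  have h2 : phiT t (u, v) ∈ B ↔ phiT t ((fun _ => false), v) ∈ B :=
    mem_phiT_right t hB u (fun _ => false) v
  by_cases hA' : phiT t (u, fun _ => false) ∈ A <;>
    by_cases hB' : phiT t ((fun _ => false), v) ∈ B <;>
      simp [Set.indicator_apply, Set.mem_inter_iff, h1, h2, hA', hB', W_phiT]

/-- Lift a configuration on an index set identified with the `t`-coordinates. -/
noncomputable def liftT (g : E₂ ≃ {e : E // t e}) (η : E₂ → Bool) : E → Bool :=
  fun e => if h : t e then η (g.symm ⟨e, h⟩) else false

/-- Transfer: an event depending only on the `t`-coordinates has the same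
probability as its pullback on a copy of the `t`-coordinates. -/
lemma transfer (g : E₂ ≃ {e : E // t e}) {A : Set (E → Bool)} (hA : DepOn t A) :
    bernoulliPr p A = bernoulliPr p (liftT t g ⁻¹' A) := by
  rw [depOn_eval p t hA, bernoulliPr_eq]
  refine (Fintype.sum_equiv (Equiv.arrowCongr g (Equiv.refl Bool))
    (fun η : E₂ → Bool => (liftT t g ⁻¹' A).indicator (W p) η)
    (fun u => if phiT t (u, fun _ => false) ∈ A then W p u else 0) (fun η => ?_)).symm
  have h1 : phiT t ((Equiv.arrowCongr g (Equiv.refl Bool)) η, fun _ => false)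
      = liftT t g η := by
    funext e
    by_cases h : t e
    · rw [phiT_apply_pos t _ _ e h, liftT]
      simp [h]
    · rw [phiT_apply_neg t _ _ e h, liftT]
      simp [h]
  have h2 : W p ((Equiv.arrowCongr g (Equiv.refl Bool)) η) = W p η := by
    rw [W, W, ← Equiv.prod_comp g.symm (fun i => if η i = true then p else 1 - p)]
    exact Finset.prod_congr rfl fun i _ => by simp
  show (liftT t g ⁻¹' A).indicator (W p) η
      = if phiT t ((Equiv.arrowCongr g (Equiv.refl Bool)) η, fun _ => false) ∈ A
          then W p ((Equiv.arrowCongr g (Equiv.refl Bool)) η) else 0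
  rw [h1, h2]
  by_cases h : liftT t g η ∈ A
  · rw [Set.indicator_of_mem (show η ∈ liftT t g ⁻¹' A from h), if_pos h]
  · rw [Set.indicator_of_notMem (show η ∉ liftT t g ⁻¹' A from h), if_neg h]

/-- Permutation invariance of the Bernoulli measure. -/
lemma comp_equiv (σ : E ≃ E₂) (A : Set (E → Bool)) :
    bernoulliPr p {η : E₂ → Bool | (η ∘ σ) ∈ A} = bernoulliPr p A := by
  rw [bernoulliPr_eq, bernoulliPr_eq]
  refine Fintype.sum_equiv (Equiv.arrowCongr σ (Equiv.refl Bool)).symm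
    (fun η : E₂ → Bool => Set.indicator {η' : E₂ → Bool | (η' ∘ σ) ∈ A} (W p) η)
    (fun ω : E → Bool => A.indicator (W p) ω) (fun η => ?_)
  have h1 : (Equiv.arrowCongr σ (Equiv.refl Bool)).symm η = η ∘ σ := by
    funext e; simp
  have h2 : W p (η ∘ σ) = W p η := by
    rw [W, W, ← Equiv.prod_comp σ (fun i => if η i = true then p else 1 - p)]
    exact Finset.prod_congr rfl fun i _ => rfl
  have hmem : η ∈ {η' : E₂ → Bool | (η' ∘ σ) ∈ A} ↔ (η ∘ σ) ∈ A := Iff.rfl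
  show {η' : E₂ → Bool | (η' ∘ σ) ∈ A}.indicator (W p) η
      = A.indicator (W p) ((Equiv.arrowCongr σ (Equiv.refl Bool)).symm η)
  rw [h1]
  by_cases h : (η ∘ σ) ∈ A
  · rw [Set.indicator_of_mem h, Set.indicator_of_mem (hmem.mpr h), h2]
  · rw [Set.indicator_of_notMem (fun hh => h (hmem.mp hh)), Set.indicator_of_notMem h]
end BPr

namespace SAT
open BPr
variable {n m : ℕ}

@[simp] lemma negLit_negLit (z : Lit n) : negLit (negLit z) = z := by
  simp [negLit]

@[simp] lemma negLit_fst (z : Lit n) : (negLit z).1 = z.1 := rfl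

lemma fEdge_flip {ω : Sym2 (Lit n) → Bool} {a b : Lit n} (h : fEdge ω a b) :
    fEdge ω (negLit b) (negLit a) := by
  refine ⟨fun hh => h.1 (by simpa using hh.symm), ?_⟩
  rw [negLit_negLit, Sym2.eq_swap]
  exact h.2

lemma freach_flip {ω : Sym2 (Lit n) → Bool} {a b : Lit n} (h : freach ω a b) :
    freach ω (negLit b) (negLit a) := by
  induction h with
  | refl => exact Relation.ReflTransGen.refl
  | tail _ e ih => exact Relation.ReflTransGen.head (fEdge_flip e) ih

lemma mem_outSet_self (ω : Sym2 (Lit n) → Bool) (z : Lit n) : z ∈ outSet ω z :=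
  Relation.ReflTransGen.refl

lemma sdset_outSet_iff (ω : Sym2 (Lit n) → Bool) (z : Lit n) :
    SDset (outSet ω z) ↔ ¬ freach ω z (negLit z) := by
  constructor
  · intro hsd h
    exact hsd z (mem_outSet_self ω z) h
  · intro h hz hmem hcon
    refine h ?_
    have h2 : freach ω hz (negLit z) := by
      have := freach_flip hcon
      rwa [negLit_negLit] at this
    exact Relation.ReflTransGen.trans hmem h2

lemma injOn_fst_of_sdset {M : Set (Lit n)} (h : SDset M) : Set.InjOn Prod.fst M := by
  intro a ha b hb hab
  by_contra hne
  have : b = negLit a := by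
    rcases a with ⟨av, ab⟩; rcases b with ⟨bv, bb⟩
    simp only at hab
    subst hab
    have : ab ≠ bb := fun hh => hne (by rw [hh])
    cases ab <;> cases bb <;> simp_all [negLit]
  exact h a ha (this ▸ hb)

lemma outSet_finite (ω : Sym2 (Lit n) → Bool) (z : Lit n) : (outSet ω z).Finite :=
  Set.toFinite _

lemma ncard_outSet_pos (ω : Sym2 (Lit n) → Bool) (z : Lit n) :
    1 ≤ (outSet ω z).ncard := by
  rw [Nat.one_le_iff_ne_zero, ← Nat.pos_iff_ne_zero]
  exact (Set.ncard_pos (outSet_finite ω z)).mpr ⟨z, mem_outSet_self ω z⟩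

lemma ncard_le_of_sdset {M : Set (Lit n)} (h : SDset M) : M.ncard ≤ n := by
  have h1 : M.ncard = (Prod.fst '' M).ncard :=
    (Set.ncard_image_of_injOn (injOn_fst_of_sdset h)).symm
  rw [h1]
  have h2 := Set.ncard_le_ncard (Set.subset_univ (Prod.fst '' M)) (Set.finite_univ)
  simpa [Set.ncard_univ] using h2

/-- The coordinate `e` involves a variable in `V`. -/
def touch (V : Set (Fin n)) (e : Sym2 (Lit n)) : Prop := ∃ z ∈ e, z.1 ∈ V

lemma not_touch_pair {V : Set (Fin n)} {a b : Lit n} (ha : a.1 ∉ V) (hb : b.1 ∉ V) :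
    ¬ touch V s(a, b) := by
  rintro ⟨z, hz, hzV⟩
  rcases Sym2.mem_iff.mp hz with rfl | rfl
  · exact ha hzV
  · exact hb hzV

/-- Locality of the event `outSet ω y = S`. -/
lemma outSet_eq_of_agree {ω ω' : Sym2 (Lit n) → Bool} {S : Set (Lit n)} {y : Lit n}
    (hag : ∀ e, touch (Prod.fst '' S) e → ω e = ω' e) (h : outSet ω y = S) :
    outSet ω' y = S := by
  have hyS : y ∈ S := h ▸ Relation.ReflTransGen.refl
  have hsub : ∀ v, freach ω' y v → v ∈ S := by
    intro v hv
    induction hv with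
    | refl => exact hyS
    | @tail u v hyu e ih =>
      have hcoord : ω s(negLit u, v) = ω' s(negLit u, v) :=
        hag _ ⟨negLit u, Sym2.mem_iff.mpr (Or.inl rfl), ⟨u, ih, rfl⟩⟩
      have hedge : fEdge ω u v := ⟨e.1, by rw [hcoord]; exact e.2⟩
      have hyu' : freach ω y u := by rw [← h] at ih; exact ih
      have : v ∈ outSet ω y := Relation.ReflTransGen.tail hyu' hedge
      rwa [h] at this
  have hsup : ∀ v, freach ω y v → freach ω' y v := by
    intro v hv
    induction hv with
    | refl => exact Relation.ReflTransGen.refl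
    | @tail u v hyu e ih =>
      have huS : u ∈ S := by rw [← h]; exact hyu
      have hcoord : ω s(negLit u, v) = ω' s(negLit u, v) :=
        hag _ ⟨negLit u, Sym2.mem_iff.mpr (Or.inl rfl), ⟨u, huS, rfl⟩⟩
      exact Relation.ReflTransGen.tail ih ⟨e.1, by rw [← hcoord]; exact e.2⟩
  ext v
  refine ⟨fun hv => hsub v hv, fun hv => hsup v ?_⟩
  rw [show (freach ω y v) = (v ∈ outSet ω y) from rfl, h]
  exact hv

/-- Edges of the implication digraph restricted to literals outside `V`. -/
def rEdge (V : Set (Fin n)) (ω : Sym2 (Lit n) → Bool) (a b : Lit n) : Prop :=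
  a.1 ∉ V ∧ b.1 ∉ V ∧ fEdge ω a b

def rreach (V : Set (Fin n)) (ω : Sym2 (Lit n) → Bool) : Lit n → Lit n → Prop :=
  Relation.ReflTransGen (rEdge V ω)

lemma rreach_le_freach {V : Set (Fin n)} {ω : Sym2 (Lit n) → Bool} {a b : Lit n}
    (h : rreach V ω a b) : freach ω a b :=
  Relation.ReflTransGen.mono (r := rEdge V ω) (fun _ _ h' => h'.2.2) _ _ h

lemma rreach_of_agree {V : Set (Fin n)} {ω ω' : Sym2 (Lit n) → Bool} {a b : Lit n}
    (hag : ∀ e, ¬ touch V e → ω e = ω' e) (h : rreach V ω a b) : rreach V ω' a b := by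
  induction h with
  | refl => exact Relation.ReflTransGen.refl
  | @tail u v _ e ih =>
    have hcoord : ω s(negLit u, v) = ω' s(negLit u, v) :=
      hag _ (not_touch_pair (by exact e.1) e.2.1)
    exact Relation.ReflTransGen.tail ih ⟨e.1, e.2.1, e.2.2.1, by rw [← hcoord]; exact e.2.2.2⟩

section corr
variable {f : Lit m → Lit n} {V : Set (Fin n)}
  {ωn : Sym2 (Lit n) → Bool} {ηm : Sym2 (Lit m) → Bool}

lemma edge_corr (hcoord : ∀ e, ωn (Sym2.map f e) = ηm e)
    (hneg : ∀ z, f (negLit z) = negLit (f z))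
    (hvar : ∀ a b : Lit m, (f a).1 = (f b).1 ↔ a.1 = b.1)
    (hout : ∀ z, (f z).1 ∉ V) (a b : Lit m) :
    rEdge V ωn (f a) (f b) ↔ fEdge ηm a b := by
  have hc : ωn s(negLit (f a), f b) = ηm s(negLit a, b) := by
    rw [← hneg, ← Sym2.map_pair_eq, hcoord]
  constructor
  · rintro ⟨-, -, hne, hval⟩
    exact ⟨fun h => hne ((hvar a b).mpr h), by rw [← hc]; exact hval⟩
  · rintro ⟨hne, hval⟩
    exact ⟨hout a, hout b, fun h => hne ((hvar a b).mp h), by rw [hc]; exact hval⟩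

lemma rreach_corr (hcoord : ∀ e, ωn (Sym2.map f e) = ηm e)
    (hneg : ∀ z, f (negLit z) = negLit (f z))
    (hvar : ∀ a b : Lit m, (f a).1 = (f b).1 ↔ a.1 = b.1)
    (hout : ∀ z, (f z).1 ∉ V)
    (hsurj : ∀ w : Lit n, w.1 ∉ V → ∃ z, f z = w)
    (hinj : Function.Injective f) (a b : Lit m) :
    rreach V ωn (f a) (f b) ↔ freach ηm a b := by
  constructor
  · intro h
    have key : ∀ c, rreach V ωn (f a) c → ∃ z, f z = c ∧ freach ηm a z := by
      intro c hc
      induction hc with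
      | refl => exact ⟨a, rfl, Relation.ReflTransGen.refl⟩
      | @tail u c _ e ih =>
        obtain ⟨z, rfl, hz⟩ := ih
        obtain ⟨z', rfl⟩ := hsurj c e.2.1
        exact ⟨z', rfl, Relation.ReflTransGen.tail hz
          ((edge_corr hcoord hneg hvar hout z z').mp e)⟩
    obtain ⟨z, hz, hr⟩ := key (f b) h
    rwa [hinj hz] at hr
  · intro h
    induction h with
    | refl => exact Relation.ReflTransGen.refl
    | @tail u c _ e ih =>
      exact Relation.ReflTransGen.tail ih ((edge_corr hcoord hneg hvar hout u c).mpr e)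

end corr

lemma rreach_empty_iff {ω : Sym2 (Lit n) → Bool} {a b : Lit n} :
    rreach (∅ : Set (Fin n)) ω a b ↔ freach ω a b := by
  constructor
  · exact fun h0 => Relation.ReflTransGen.mono (r := rEdge ∅ ω) (fun _ _ h => h.2.2) _ _ h0
  · exact fun h0 => Relation.ReflTransGen.mono (r := fEdge ω) (fun u v h =>
      ⟨Set.notMem_empty _, Set.notMem_empty _, h⟩) _ _ h0

lemma sdset_preimage (χ : Lit n ≃ Lit n) (hneg : ∀ z, χ (negLit z) = negLit (χ z))
    (M : Set (Lit n)) : SDset (χ ⁻¹' M) ↔ SDset M := by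
  constructor
  · intro h z hz hcon
    refine h (χ.symm z) ?_ ?_
    · show χ (χ.symm z) ∈ M
      rwa [Equiv.apply_symm_apply]
    · show χ (negLit (χ.symm z)) ∈ M
      rw [hneg, Equiv.apply_symm_apply]
      exact hcon
  · intro h z hz hcon
    refine h (χ z) hz ?_
    rw [← hneg]
    exact hcon

lemma ncard_preimage (χ : Lit n ≃ Lit n) (M : Set (Lit n)) :
    (χ ⁻¹' M).ncard = M.ncard := by
  rw [← Equiv.image_symm_eq_preimage]
  exact Set.ncard_image_of_injective _ (Equiv.injective _)

/-- Event: `x ⇝ x̄`. -/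
def Aev (n : ℕ) (x : Lit n) : Set (Sym2 (Lit n) → Bool) := {ω | freach ω x (negLit x)}
/-- Event: `y ⇝ ȳ`. -/
def Bev (n : ℕ) (y : Lit n) : Set (Sym2 (Lit n) → Bool) := {ω | freach ω y (negLit y)}
/-- Event: the out-set of `y` is strictly distinct of size `k`. -/
def Cev (n : ℕ) (y : Lit n) (k : ℕ) : Set (Sym2 (Lit n) → Bool) :=
  {ω | SDset (outSet ω y) ∧ (outSet ω y).ncard = k}
/-- Event: the out-set of `y` is exactly `↑S`. -/
def ES (n : ℕ) (y : Lit n) (S : Finset (Lit n)) : Set (Sym2 (Lit n) → Bool) :=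
  {ω | outSet ω y = ↑S}
/-- Event: `Cev` together with the variable `w` being avoided by the out-set. -/
def Dev (n : ℕ) (y : Lit n) (k : ℕ) (w : Fin n) : Set (Sym2 (Lit n) → Bool) :=
  {ω | SDset (outSet ω y) ∧ (outSet ω y).ncard = k ∧ ∀ z ∈ outSet ω y, z.1 ≠ w}
/-- Event: `x ⇝ x̄` within the variables outside `V`. -/
def Arest (n : ℕ) (V : Set (Fin n)) (x : Lit n) : Set (Sym2 (Lit n) → Bool) :=
  {ω | rreach V ω x (negLit x)}
end SAT

namespace SAT
open BPr
variable {n : ℕ}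

lemma beq_not_left (a b : Bool) : ((!a) == b) = !(a == b) := by
  cases a <;> cases b <;> rfl

lemma beq_beq_right (a b : Bool) : ((a == b) == b) = a := by
  cases a <;> cases b <;> rfl

lemma beq_inj (a b c : Bool) (h : (a == c) = (b == c)) : a = b := by
  cases a <;> cases b <;> cases c <;> simp_all

lemma perS (p : ℝ) (hp0 : 0 ≤ p) (hp1 : p ≤ 1) (x y : Lit n) (k : ℕ)
    (S : Finset (Lit n)) (hSD : SDset (↑S : Set (Lit n))) (hcard : S.card = k)
    (hxS : ∀ z ∈ S, z.1 ≠ x.1) :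
    spineProb (n - k) p * bernoulliPr p (ES n y S)
      ≤ bernoulliPr p (Aev n x ∩ ES n y S) := by
  classical
  set V : Set (Fin n) := Prod.fst '' (↑S : Set (Lit n)) with hV
  have hxV : x.1 ∉ V := by rintro ⟨z, hz, hz1⟩; exact hxS z hz hz1
  have hVk : Fintype.card {v : Fin n // v ∈ V} = k := by
    rw [← Nat.card_eq_fintype_card, Nat.card_coe_set_eq, hV,
      Set.ncard_image_of_injOn (injOn_fst_of_sdset hSD), Set.ncard_coe_finset, hcard]
  have hcompl : Fintype.card {v : Fin n // v ∉ V} = n - k := by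
    rw [Fintype.card_subtype_compl, hVk, Fintype.card_fin]
  have hm0 : 0 < n - k := by
    rw [← hcompl]
    exact Fintype.card_pos_iff.mpr ⟨⟨x.1, hxV⟩⟩
  set ψ : {v : Fin n // v ∉ V} ≃ Fin (n - k) :=
    (Fintype.equivFinOfCardEq hcompl).trans
      (Equiv.swap ((Fintype.equivFinOfCardEq hcompl) ⟨x.1, hxV⟩) ⟨0, hm0⟩) with hψ
  have hψx : ψ ⟨x.1, hxV⟩ = ⟨0, hm0⟩ := by
    rw [hψ]; simp [Equiv.swap_apply_left]
  set ι : Lit (n - k) → Lit n :=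
    fun z => (((ψ.symm z.1 : {v : Fin n // v ∉ V}) : Fin n), z.2 == x.2) with hι
  have hneg : ∀ z, ι (negLit z) = negLit (ι z) := by
    intro z
    simp only [hι, negLit, beq_not_left]
  have hvar : ∀ a b : Lit (n - k), (ι a).1 = (ι b).1 ↔ a.1 = b.1 := by
    intro a b
    rw [hι]
    constructor
    · intro h
      exact ψ.symm.injective (Subtype.coe_injective h)
    · intro h
      simp only [hι]
      rw [h]
  have hout : ∀ z, (ι z).1 ∉ V := fun z => (ψ.symm z.1).2
  have hsurj : ∀ w : Lit n, w.1 ∉ V → ∃ z, ι z = w := by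
    intro w hw
    refine ⟨(ψ ⟨w.1, hw⟩, w.2 == x.2), ?_⟩
    simp only [hι, Equiv.symm_apply_apply, beq_beq_right]
  have hinj : Function.Injective ι := by
    intro a b h
    rw [hι] at h
    have h1 : a.1 = b.1 := ψ.symm.injective (Subtype.coe_injective (congrArg Prod.fst h))
    have h2 : (a.2 == x.2) = (b.2 == x.2) := congrArg Prod.snd h
    exact Prod.ext h1 (beq_inj _ _ _ h2)
  have hψ0 : ψ.symm ⟨0, hm0⟩ = ⟨x.1, hxV⟩ := by rw [← hψx, Equiv.symm_apply_apply]
  have htrue : (true == x.2) = x.2 := by cases x.2 <;> rfl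
  have hιx : ι (⟨0, hm0⟩, true) = x := by
    simp only [hι, hψ0, htrue]
  have hmapmem : ∀ e : Sym2 (Lit (n - k)), ¬ touch V (Sym2.map ι e) := by
    rintro e ⟨z, hz, hzV⟩
    obtain ⟨w, hw, rfl⟩ := Sym2.mem_map.mp hz
    exact hout w hzV
  set gS : Sym2 (Lit (n - k)) ≃ {e : Sym2 (Lit n) // ¬ touch V e} :=
    Equiv.ofBijective (fun e => ⟨Sym2.map ι e, hmapmem e⟩)
      ⟨fun e1 e2 h => Sym2.map.injective hinj (congrArg Subtype.val h), by
        rintro ⟨e, he⟩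
        induction e with
        | _ a b =>
          have haV : a.1 ∉ V := fun h => he ⟨a, Sym2.mem_iff.mpr (Or.inl rfl), h⟩
          have hbV : b.1 ∉ V := fun h => he ⟨b, Sym2.mem_iff.mpr (Or.inr rfl), h⟩
          obtain ⟨za, hza⟩ := hsurj a haV
          obtain ⟨zb, hzb⟩ := hsurj b hbV
          exact ⟨s(za, zb), Subtype.ext
            (show Sym2.map ι s(za, zb) = s(a, b) by rw [Sym2.map_pair_eq, hza, hzb])⟩⟩ with hgS
  have hDepE : DepOn (touch V) (ES n y S) := by
    intro ω ω' hag h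
    exact outSet_eq_of_agree hag h
  have hDepA : DepOn (fun e => ¬ touch V e) (Arest n V x) := by
    intro ω ω' hag h
    exact rreach_of_agree hag h
  have hcoordlift : ∀ (η : Sym2 (Lit (n - k)) → Bool) (e : Sym2 (Lit (n - k))),
      liftT (fun e => ¬ touch V e) gS η (Sym2.map ι e) = η e := by
    intro η e
    rw [liftT, dif_pos (hmapmem e)]
    congr 1
    have heq : (⟨Sym2.map ι e, hmapmem e⟩ : {e : Sym2 (Lit n) // ¬ touch V e}) = gS e :=
      Subtype.ext rfl
    rw [heq, Equiv.symm_apply_apply]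
  have hset : liftT (fun e => ¬ touch V e) gS ⁻¹' (Arest n V x)
      = {η : Sym2 (Lit (n - k)) → Bool |
          freach η ((⟨0, hm0⟩, true) : Lit (n - k)) (negLit ((⟨0, hm0⟩, true) : Lit (n - k)))} := by
    ext η
    have hcorr := rreach_corr (f := ι) (V := V)
        (ωn := liftT (fun e => ¬ touch V e) gS η) (ηm := η)
        (hcoordlift η) hneg hvar hout hsurj hinj
        ((⟨0, hm0⟩, true) : Lit (n - k)) (negLit ((⟨0, hm0⟩, true) : Lit (n - k)))
    simp only [Set.mem_preimage, Arest, Set.mem_setOf_eq]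
    rw [← hιx, ← hneg]
    exact hcorr
  have hspine : spineProb (n - k) p
      = bernoulliPr p (liftT (fun e => ¬ touch V e) gS ⁻¹' (Arest n V x)) := by
    rw [spineProb, dif_pos hm0, hset]
  have hindep := indep p (touch V) hDepE hDepA
  have hsub : ES n y S ∩ Arest n V x ⊆ Aev n x ∩ ES n y S := by
    rintro ω ⟨h1, h2⟩
    exact ⟨rreach_le_freach h2, h1⟩
  calc spineProb (n - k) p * bernoulliPr p (ES n y S)
      = bernoulliPr p (Arest n V x) * bernoulliPr p (ES n y S) := by
        rw [hspine, ← transfer p (fun e => ¬ touch V e) gS hDepA]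
    _ = bernoulliPr p (ES n y S ∩ Arest n V x) := by rw [hindep, mul_comm]
    _ ≤ bernoulliPr p (Aev n x ∩ ES n y S) := bernoulliPr_mono p hp0 hp1 hsub
end SAT

namespace SAT
open BPr
variable {n : ℕ}

lemma avg_count (p : ℝ) (y : Lit n) (k : ℕ) :
    ∑ w ∈ Finset.univ.erase y.1, bernoulliPr p (Dev n y k w)
      = ((n - k : ℕ) : ℝ) * bernoulliPr p (Cev n y k) := by
  classical
  rw [Finset.sum_congr rfl (fun w _ => bernoulliPr_eq p (Dev n y k w)), Finset.sum_comm,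
    bernoulliPr_eq, Finset.mul_sum]
  refine Finset.sum_congr rfl fun ω _ => ?_
  by_cases hC : ω ∈ Cev n y k
  · have hfin : (outSet ω y).Finite := outSet_finite ω y
    set Vf : Finset (Fin n) := Finset.image Prod.fst hfin.toFinset with hVf
    have hVfcard : Vf.card = k := by
      rw [hVf, Finset.card_image_of_injOn
        (fun a ha b hb hab => injOn_fst_of_sdset hC.1
          (hfin.mem_toFinset.mp ha) (hfin.mem_toFinset.mp hb) hab),
        Set.Finite.card_toFinset]
      rw [← Nat.card_eq_fintype_card, Nat.card_coe_set_eq]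
      exact hC.2
    have hyVf : y.1 ∈ Vf :=
      Finset.mem_image.mpr ⟨y, hfin.mem_toFinset.mpr (mem_outSet_self ω y), rfl⟩
    have hind : ∀ w, Set.indicator (Dev n y k w) (W p) ω
        = if (∀ z ∈ outSet ω y, z.1 ≠ w) then W p ω else 0 := by
      intro w
      by_cases hw : ∀ z ∈ outSet ω y, z.1 ≠ w
      · rw [if_pos hw, Set.indicator_of_mem (show ω ∈ Dev n y k w from ⟨hC.1, hC.2, hw⟩)]
      · rw [if_neg hw, Set.indicator_of_notMem (fun hmem => hw hmem.2.2)]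
    rw [Finset.sum_congr rfl fun w _ => hind w, ← Finset.sum_filter]
    have hfilter : (Finset.univ.erase y.1).filter (fun w => ∀ z ∈ outSet ω y, z.1 ≠ w)
        = Vfᶜ := by
      ext w
      simp only [Finset.mem_filter, Finset.mem_erase, Finset.mem_compl, Finset.mem_univ,
        and_true, true_and]
      constructor
      · rintro ⟨-, hall⟩ hmem
        obtain ⟨z, hz, hzw⟩ := Finset.mem_image.mp (hVf ▸ hmem)
        exact hall z (hfin.mem_toFinset.mp hz) hzw
      · intro hw
        refine ⟨?_, fun z hz hzw =>
          hw (hVf ▸ Finset.mem_image.mpr ⟨z, hfin.mem_toFinset.mpr hz, hzw⟩)⟩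
        rintro rfl
        exact hw hyVf
    rw [hfilter, Finset.sum_const, Finset.card_compl, hVfcard, Fintype.card_fin,
      Set.indicator_of_mem hC, nsmul_eq_mul]
  · have hz : ∀ w ∈ Finset.univ.erase y.1, Set.indicator (Dev n y k w) (W p) ω = 0 :=
      fun w _ => Set.indicator_of_notMem (fun hmem => hC ⟨hmem.1, hmem.2.1⟩) _
    rw [Finset.sum_congr rfl hz, Finset.sum_const, Set.indicator_of_notMem hC,
      mul_zero, smul_zero]

lemma dev_perm (p : ℝ) (y : Lit n) (k : ℕ) (w w' : Fin n) (hw : w ≠ y.1) (hw' : w' ≠ y.1) :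
    bernoulliPr p (Dev n y k w) = bernoulliPr p (Dev n y k w') := by
  classical
  set τ : Fin n ≃ Fin n := Equiv.swap w w' with hτ
  set χ : Lit n ≃ Lit n := Equiv.prodCongr τ (Equiv.refl Bool) with hχ
  have hneg : ∀ z : Lit n, χ (negLit z) = negLit (χ z) := fun z => rfl
  have hvar : ∀ a b : Lit n, (χ a).1 = (χ b).1 ↔ a.1 = b.1 := by
    intro a b
    constructor
    · intro h
      exact τ.injective h
    · intro h
      show τ a.1 = τ b.1
      rw [h]
  set σ : Sym2 (Lit n) ≃ Sym2 (Lit n) :=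
    { toFun := Sym2.map χ, invFun := Sym2.map χ.symm,
      left_inv := fun e => by
        rw [Sym2.map_map]
        have : (χ.symm : Lit n → Lit n) ∘ (χ : Lit n → Lit n) = id := by
          funext z; simp
        rw [this, Sym2.map_id, id_eq],
      right_inv := fun e => by
        rw [Sym2.map_map]
        have : (χ : Lit n → Lit n) ∘ (χ.symm : Lit n → Lit n) = id := by
          funext z; simp
        rw [this, Sym2.map_id, id_eq] } with hσ
  have hχy : χ y = y := by
    show (τ y.1, y.2) = y
    rw [hτ, Equiv.swap_apply_of_ne_of_ne (Ne.symm hw) (Ne.symm hw')]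
  have hfr : ∀ (η : Sym2 (Lit n) → Bool) (a b : Lit n),
      freach (η ∘ σ) a b ↔ freach η (χ a) (χ b) := by
    intro η a b
    have hcorr := rreach_corr (f := (χ : Lit n → Lit n)) (V := (∅ : Set (Fin n)))
      (ωn := η) (ηm := η ∘ σ) (fun e => rfl) hneg hvar
      (fun z => Set.notMem_empty _) (fun w _ => ⟨χ.symm w, χ.apply_symm_apply w⟩)
      χ.injective a b
    rw [← hcorr, rreach_empty_iff]
  have houtSet : ∀ η : Sym2 (Lit n) → Bool,
      outSet (η ∘ σ) y = χ ⁻¹' (outSet η y) := by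
    intro η
    ext b
    show freach (η ∘ σ) y b ↔ χ b ∈ outSet η y
    rw [hfr η y b, hχy]
    rfl
  have hev : {η : Sym2 (Lit n) → Bool | (η ∘ σ) ∈ Dev n y k w} = Dev n y k w' := by
    ext η
    show (η ∘ σ) ∈ Dev n y k w ↔ η ∈ Dev n y k w'
    rw [show ((η ∘ σ) ∈ Dev n y k w) ↔ (SDset (outSet (η ∘ σ) y)
        ∧ (outSet (η ∘ σ) y).ncard = k ∧ ∀ z ∈ outSet (η ∘ σ) y, z.1 ≠ w) from Iff.rfl,
      houtSet η, sdset_preimage χ hneg, ncard_preimage χ]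
    constructor
    · rintro ⟨h1, h2, h3⟩
      refine ⟨h1, h2, fun z hz hzw' => ?_⟩
      have hmem : χ.symm z ∈ χ ⁻¹' (outSet η y) := by
        show χ (χ.symm z) ∈ outSet η y
        rwa [Equiv.apply_symm_apply]
      refine h3 (χ.symm z) hmem ?_
      show τ.symm z.1 = w
      rw [hτ, Equiv.symm_swap, hzw', Equiv.swap_apply_right]
    · rintro ⟨h1, h2, h3⟩
      refine ⟨h1, h2, fun z hz hzw => ?_⟩
      refine h3 (χ z) hz ?_
      show τ z.1 = w'
      rw [hzw, hτ, Equiv.swap_apply_left]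
  have key := comp_equiv p σ (Dev n y k w)
  rw [hev] at key
  exact key.symm
end SAT

namespace SAT
open BPr
variable {n : ℕ}

lemma compl_Bev (y : Lit n) :
    (Bev n y)ᶜ = ⋃ k ∈ Finset.Icc 1 n, Cev n y k := by
  ext ω
  simp only [Set.mem_compl_iff, Bev, Set.mem_setOf_eq, Set.mem_iUnion, exists_prop]
  constructor
  · intro h
    have hsd : SDset (outSet ω y) := (sdset_outSet_iff ω y).mpr h
    exact ⟨(outSet ω y).ncard,
      Finset.mem_Icc.mpr ⟨ncard_outSet_pos ω y, ncard_le_of_sdset hsd⟩, hsd, rfl⟩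
  · rintro ⟨k, -, hsd, -⟩
    exact (sdset_outSet_iff ω y).mp hsd

lemma Cev_disjoint (y : Lit n) : ∀ k ∈ Finset.Icc 1 n, ∀ j ∈ Finset.Icc 1 n, k ≠ j →
    ∀ ω : Sym2 (Lit n) → Bool, ω ∈ Cev n y k → ω ∉ Cev n y j := by
  intro k _ j _ hkj ω hk hj
  exact hkj (hk.2.symm.trans hj.2)

lemma sum_Pnp (p : ℝ) (y : Lit n) :
    ∑ k ∈ Finset.Icc 1 n, Pnp n p k y = 1 - bernoulliPr p (Bev n y) := by
  have h1 : ∀ k ∈ Finset.Icc 1 n, Pnp n p k y = bernoulliPr p (Cev n y k) := fun k _ => rfl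
  rw [Finset.sum_congr rfl h1, ← bernoulliPr_biUnion p _ _ (Cev_disjoint y), ← compl_Bev y]
  have := bernoulliPr_add_compl p (Bev n y)
  linarith

lemma split_A (p : ℝ) (x y : Lit n) :
    bernoulliPr p (Aev n x ∩ Bev n y)
      = bernoulliPr p (Aev n x)
        - ∑ k ∈ Finset.Icc 1 n, bernoulliPr p (Aev n x ∩ Cev n y k) := by
  have hdiff : Aev n x \ Bev n y = ⋃ k ∈ Finset.Icc 1 n, (Aev n x ∩ Cev n y k) := by
    rw [Set.diff_eq, compl_Bev y, Set.inter_iUnion₂]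
  have hdisj : ∀ k ∈ Finset.Icc 1 n, ∀ j ∈ Finset.Icc 1 n, k ≠ j →
      ∀ ω : Sym2 (Lit n) → Bool, ω ∈ Aev n x ∩ Cev n y k → ω ∉ Aev n x ∩ Cev n y j :=
    fun k hk j hj hkj ω h1 h2 => Cev_disjoint y k hk j hj hkj ω h1.2 h2.2
  have h := bernoulliPr_inter_add_diff p (Aev n x) (Bev n y)
  rw [hdiff, bernoulliPr_biUnion p _ _ hdisj] at h
  linarith

lemma mainK (p : ℝ) (hp0 : 0 ≤ p) (hp1 : p ≤ 1) (x y : Lit n) (hxy : x.1 ≠ y.1)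
    (k : ℕ) (hk : k ∈ Finset.Icc 1 n) :
    Pnp n p k y * ((((n:ℝ) - (k:ℝ))/((n:ℝ) - 1)) * spineProb (n - k) p)
      ≤ bernoulliPr p (Aev n x ∩ Cev n y k) := by
  classical
  have hn2 : 2 ≤ n := by
    have : Nontrivial (Fin n) := ⟨⟨x.1, y.1, hxy⟩⟩
    have := Fintype.one_lt_card_iff_nontrivial.mpr this
    rwa [Fintype.card_fin] at this
  set 𝒮 : Finset (Finset (Lit n)) :=
    Finset.univ.filter
      (fun S => SDset (↑S : Set (Lit n)) ∧ S.card = k ∧ ∀ z ∈ S, z.1 ≠ x.1) with h𝒮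
  have hES_disj : ∀ S ∈ 𝒮, ∀ T ∈ 𝒮, S ≠ T →
      ∀ ω : Sym2 (Lit n) → Bool, ω ∈ ES n y S → ω ∉ ES n y T := by
    intro S _ T _ hST ω hS hT
    refine hST (Finset.coe_injective ?_)
    rw [← show outSet ω y = ↑S from hS, ← show outSet ω y = ↑T from hT]
  have hDunion : Dev n y k x.1 = ⋃ S ∈ 𝒮, ES n y S := by
    ext ω
    simp only [Set.mem_iUnion, exists_prop]
    constructor
    · rintro ⟨hsd, hk', hvars⟩
      have hfin := outSet_finite ω y
      refine ⟨hfin.toFinset, ?_, ?_⟩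
      · rw [h𝒮, Finset.mem_filter]
        refine ⟨Finset.mem_univ _, ?_, ?_, ?_⟩
        · rw [hfin.coe_toFinset]; exact hsd
        · rw [← Set.ncard_eq_toFinset_card _ hfin]; exact hk'
        · intro z hz; exact hvars z (hfin.mem_toFinset.mp hz)
      · show outSet ω y = ↑hfin.toFinset
        rw [hfin.coe_toFinset]
    · rintro ⟨S, hS𝒮, hES⟩
      rw [h𝒮, Finset.mem_filter] at hS𝒮
      obtain ⟨-, hsd, hcard, hvars⟩ := hS𝒮
      have hout : outSet ω y = ↑S := hES
      refine ⟨hout ▸ hsd, ?_, ?_⟩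
      · rw [hout, Set.ncard_coe_finset]; exact hcard
      · intro z hz
        exact hvars z (by rw [hout] at hz; exact hz)
  have hADunion : Aev n x ∩ Dev n y k x.1 = ⋃ S ∈ 𝒮, (Aev n x ∩ ES n y S) := by
    rw [hDunion, Set.inter_iUnion₂]
  have hAESdisj : ∀ S ∈ 𝒮, ∀ T ∈ 𝒮, S ≠ T →
      ∀ ω : Sym2 (Lit n) → Bool, ω ∈ Aev n x ∩ ES n y S → ω ∉ Aev n x ∩ ES n y T :=
    fun S hS T hT hST ω h1 h2 => hES_disj S hS T hT hST ω h1.2 h2.2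
  have hPrD : bernoulliPr p (Dev n y k x.1) = ∑ S ∈ 𝒮, bernoulliPr p (ES n y S) := by
    rw [hDunion]
    exact bernoulliPr_biUnion p 𝒮 _ hES_disj
  have hPrAD : bernoulliPr p (Aev n x ∩ Dev n y k x.1)
      = ∑ S ∈ 𝒮, bernoulliPr p (Aev n x ∩ ES n y S) := by
    rw [hADunion]
    exact bernoulliPr_biUnion p 𝒮 _ hAESdisj
  have hperm : ∀ w ∈ Finset.univ.erase y.1,
      bernoulliPr p (Dev n y k w) = bernoulliPr p (Dev n y k x.1) :=
    fun w hw => dev_perm p y k w x.1 (Finset.mem_erase.mp hw).1 hxy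
  have hsum1 : ∑ w ∈ Finset.univ.erase y.1, bernoulliPr p (Dev n y k w)
      = ((n - 1 : ℕ) : ℝ) * bernoulliPr p (Dev n y k x.1) := by
    rw [Finset.sum_congr rfl hperm, Finset.sum_const,
      Finset.card_erase_of_mem (Finset.mem_univ _), Finset.card_univ, Fintype.card_fin,
      nsmul_eq_mul]
  have havg := avg_count p y k
  have hkn : k ≤ n := (Finset.mem_Icc.mp hk).2
  have e1 : ((n - 1 : ℕ) : ℝ) = (n:ℝ) - 1 := by
    rw [Nat.cast_sub (by omega : 1 ≤ n)]; norm_num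
  have e2 : ((n - k : ℕ) : ℝ) = (n:ℝ) - (k:ℝ) := by
    rw [Nat.cast_sub hkn]
  have hcast : ((n:ℝ) - 1) * bernoulliPr p (Dev n y k x.1)
      = ((n:ℝ) - (k:ℝ)) * bernoulliPr p (Cev n y k) := by
    rw [← e1, ← e2, ← hsum1, havg]
  have hn1 : (0:ℝ) < (n:ℝ) - 1 := by
    have h2 : (2:ℝ) ≤ (n:ℝ) := by exact_mod_cast hn2
    linarith
  have hPrDval : bernoulliPr p (Dev n y k x.1)
      = (((n:ℝ) - (k:ℝ))/((n:ℝ) - 1)) * bernoulliPr p (Cev n y k) := by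
    rw [div_mul_eq_mul_div, eq_div_iff hn1.ne']
    linear_combination hcast
  have hper : ∀ S ∈ 𝒮, spineProb (n - k) p * bernoulliPr p (ES n y S)
      ≤ bernoulliPr p (Aev n x ∩ ES n y S) := by
    intro S hS
    rw [h𝒮, Finset.mem_filter] at hS
    exact perS p hp0 hp1 x y k S hS.2.1 hS.2.2.1 hS.2.2.2
  have hDC : Aev n x ∩ Dev n y k x.1 ⊆ Aev n x ∩ Cev n y k :=
    fun ω h => ⟨h.1, h.2.1, h.2.2.1⟩
  calc Pnp n p k y * ((((n:ℝ) - (k:ℝ))/((n:ℝ) - 1)) * spineProb (n - k) p)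
      = spineProb (n - k) p
          * ((((n:ℝ) - (k:ℝ))/((n:ℝ) - 1)) * bernoulliPr p (Cev n y k)) := by
        rw [show Pnp n p k y = bernoulliPr p (Cev n y k) from rfl]; ring
    _ = spineProb (n - k) p * bernoulliPr p (Dev n y k x.1) := by rw [hPrDval]
    _ = ∑ S ∈ 𝒮, spineProb (n - k) p * bernoulliPr p (ES n y S) := by
        rw [hPrD, Finset.mul_sum]
    _ ≤ ∑ S ∈ 𝒮, bernoulliPr p (Aev n x ∩ ES n y S) := Finset.sum_le_sum hper
    _ = bernoulliPr p (Aev n x ∩ Dev n y k x.1) := hPrAD.symm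
    _ ≤ bernoulliPr p (Aev n x ∩ Cev n y k) := bernoulliPr_mono p hp0 hp1 hDC
end SAT

/-- Covariance bound for the events `x ⇝ x̄` and `y ⇝ ȳ`:
`Pr(x⇝x̄ ∧ y⇝ȳ) − Pr(x⇝x̄)·Pr(y⇝ȳ)
  ≤ Σ_{k≥1} P_{n,p}(k)·[Pr(x⇝x̄ in F_{n,p}) − ((n−k)/(n−1))·Pr(x⇝x̄ in F_{n−k,p})]`. -/
theorem covariance_bound (n : ℕ) (p : ℝ) (hp0 : 0 ≤ p) (hp1 : p ≤ 1)
    (x y : Lit n) (hxy : x.1 ≠ y.1) :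
    bernoulliPr p
        {ω : Sym2 (Lit n) → Bool |
          freach ω x (negLit x) ∧ freach ω y (negLit y)} -
      bernoulliPr p {ω : Sym2 (Lit n) → Bool | freach ω x (negLit x)} *
        bernoulliPr p {ω : Sym2 (Lit n) → Bool | freach ω y (negLit y)} ≤
    ∑ k ∈ Finset.Icc 1 n,
      Pnp n p k y *
        (bernoulliPr p {ω : Sym2 (Lit n) → Bool | freach ω x (negLit x)} -
          (((n : ℝ) - (k : ℝ)) / ((n : ℝ) - 1)) * spineProb (n - k) p) := by
  classical
  have hAB : {ω : Sym2 (Lit n) → Bool | freach ω x (negLit x) ∧ freach ω y (negLit y)}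
      = SAT.Aev n x ∩ SAT.Bev n y := rfl
  have hA : {ω : Sym2 (Lit n) → Bool | freach ω x (negLit x)} = SAT.Aev n x := rfl
  have hB : {ω : Sym2 (Lit n) → Bool | freach ω y (negLit y)} = SAT.Bev n y := rfl
  rw [hAB, hA, hB]
  have hsumP := SAT.sum_Pnp p y
  have hsplit := SAT.split_A p x y
  have hmain := fun k hk => SAT.mainK p hp0 hp1 x y hxy k hk
  have hsumle : ∑ k ∈ Finset.Icc 1 n,
        Pnp n p k y * ((((n:ℝ) - (k:ℝ))/((n:ℝ) - 1)) * spineProb (n - k) p)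
      ≤ ∑ k ∈ Finset.Icc 1 n, bernoulliPr p (SAT.Aev n x ∩ SAT.Cev n y k) :=
    Finset.sum_le_sum hmain
  have hrhs : ∑ k ∈ Finset.Icc 1 n,
        Pnp n p k y * (bernoulliPr p (SAT.Aev n x)
          - (((n:ℝ) - (k:ℝ))/((n:ℝ) - 1)) * spineProb (n - k) p)
      = (1 - bernoulliPr p (SAT.Bev n y)) * bernoulliPr p (SAT.Aev n x)
        - ∑ k ∈ Finset.Icc 1 n,
            Pnp n p k y * ((((n:ℝ) - (k:ℝ))/((n:ℝ) - 1)) * spineProb (n - k) p) := by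
    rw [← hsumP, Finset.sum_mul]
    rw [← Finset.sum_sub_distrib]
    refine Finset.sum_congr rfl fun k _ => ?_
    ring
  rw [hrhs]
  linarith
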